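/- Let H be a d×d symmetric positive definite real matrix with condition number κ = σ_max(H)/σ_min(H), let r : ℝ^d → ℝ be convex, let F be a quadratic function with constant Hessian H, and let w* be the global minimizer of F + r. Let ε ∈ (0, 1). Suppose for each t a symmetric positive definite matrix H̃_t satisfies (1−ε)H ⪯ H̃_t ⪯ (1+ε)H, and w_{t+1} is the global minimizer of z ↦ (1/2)‖z − (w_t − H̃_t⁻¹∇F(w_t))‖_{H̃_t}² + r(z). Then for every t ≥ 0, ‖w_t − w*‖₂ ≤ (ε/(1−ε))^t · √κ · ‖w_0 − w*‖₂. -/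

import Mathlib

open Matrix
open scoped RealInnerProductSpace

noncomputable section

/-- The `H`-weighted norm `‖x‖_H = √(xᵀHx)` of a vector in Euclidean space. -/
def normHE {d : ℕ} (H : Matrix (Fin d) (Fin d) ℝ) (x : EuclideanSpace ℝ (Fin d)) : ℝ :=
  Real.sqrt ⟪x, Matrix.toEuclideanLin H x⟫

/-- The smallest eigenvalue of a Hermitian matrix. -/
def sMin {d : ℕ} {H : Matrix (Fin d) (Fin d) ℝ} (hH : H.IsHermitian) : ℝ :=
  ⨅ i, hH.eigenvalues i

/-- The largest eigenvalue of a Hermitian matrix. -/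
def sMax {d : ℕ} {H : Matrix (Fin d) (Fin d) ℝ} (hH : H.IsHermitian) : ℝ :=
  ⨆ i, hH.eigenvalues i

namespace SSPNAux
variable {d : ℕ}

abbrev E (d : ℕ) := EuclideanSpace ℝ (Fin d)

def qf (M : Matrix (Fin d) (Fin d) ℝ) (x : E d) : ℝ := ⟪x, Matrix.toEuclideanLin M x⟫

def bf (M : Matrix (Fin d) (Fin d) ℝ) (x y : E d) : ℝ := ⟪x, Matrix.toEuclideanLin M y⟫

lemma qf_nonneg {M : Matrix (Fin d) (Fin d) ℝ} (hM : M.PosSemidef) (x : E d) :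
    0 ≤ qf M x := by
  have := hM.dotProduct_mulVec_nonneg (WithLp.equiv 2 _ x)
  simpa [qf, EuclideanSpace.inner_eq_star_dotProduct, Matrix.toEuclideanLin_apply, dotProduct_comm] using this

lemma bf_symm {M : Matrix (Fin d) (Fin d) ℝ} (hM : M.IsHermitian) (x y : E d) :
    bf M x y = bf M y x := by
  have hs := (Matrix.isHermitian_iff_isSymmetric).mp hM
  unfold bf
  rw [← hs x y, real_inner_comm]

lemma bf_add_right (M : Matrix (Fin d) (Fin d) ℝ) (x y z : E d) :
    bf M x (y + z) = bf M x y + bf M x z := by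
  simp [bf, inner_add_right]

lemma bf_sub_right (M : Matrix (Fin d) (Fin d) ℝ) (x y z : E d) :
    bf M x (y - z) = bf M x y - bf M x z := by
  simp [bf, inner_sub_right]

lemma bf_smul_right (M : Matrix (Fin d) (Fin d) ℝ) (t : ℝ) (x y : E d) :
    bf M x (t • y) = t * bf M x y := by
  simp [bf, _root_.map_smul, inner_smul_right]

lemma bf_smul_left (M : Matrix (Fin d) (Fin d) ℝ) (t : ℝ) (x y : E d) :
    bf M (t • x) y = t * bf M x y := by
  simp [bf, inner_smul_left]

lemma bf_neg_right (M : Matrix (Fin d) (Fin d) ℝ) (x y : E d) :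
    bf M x (-y) = -bf M x y := by
  simp [bf, inner_neg_right]

lemma bf_matrix_sub (M N : Matrix (Fin d) (Fin d) ℝ) (x y : E d) :
    bf (M - N) x y = bf M x y - bf N x y := by
  simp [bf, map_sub, inner_sub_right]

lemma bf_matrix_add (M N : Matrix (Fin d) (Fin d) ℝ) (x y : E d) :
    bf (M + N) x y = bf M x y + bf N x y := by
  simp [bf, map_add, inner_add_right]

lemma bf_matrix_smul (c : ℝ) (M : Matrix (Fin d) (Fin d) ℝ) (x y : E d) :
    bf (c • M) x y = c * bf M x y := by
  simp [bf, _root_.map_smul, inner_smul_right]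

lemma qf_eq_bf (M : Matrix (Fin d) (Fin d) ℝ) (x : E d) : qf M x = bf M x x := rfl

lemma qf_matrix_sub (M N : Matrix (Fin d) (Fin d) ℝ) (x : E d) :
    qf (M - N) x = qf M x - qf N x := bf_matrix_sub M N x x

lemma qf_matrix_add (M N : Matrix (Fin d) (Fin d) ℝ) (x : E d) :
    qf (M + N) x = qf M x + qf N x := bf_matrix_add M N x x

lemma qf_matrix_smul (c : ℝ) (M : Matrix (Fin d) (Fin d) ℝ) (x : E d) :
    qf (c • M) x = c * qf M x := bf_matrix_smul c M x x

lemma qf_add {M : Matrix (Fin d) (Fin d) ℝ} (hM : M.IsHermitian) (x y : E d) :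
    qf M (x + y) = qf M x + 2 * bf M x y + qf M y := by
  simp only [qf, bf, map_add, inner_add_left, inner_add_right]
  have := bf_symm hM y x
  unfold bf at this
  rw [this]; ring

lemma qf_sub {M : Matrix (Fin d) (Fin d) ℝ} (hM : M.IsHermitian) (x y : E d) :
    qf M (x - y) = qf M x - 2 * bf M x y + qf M y := by
  have := qf_add hM x (-y)
  simpa [bf_smul_right, qf, bf, map_neg, inner_neg_left, inner_neg_right,
    sub_eq_add_neg] using this

lemma qf_smul (M : Matrix (Fin d) (Fin d) ℝ) (t : ℝ) (x : E d) :
    qf M (t • x) = t ^ 2 * qf M x := by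
  simp [qf, _root_.map_smul, inner_smul_left, inner_smul_right]; ring

lemma qf_neg (M : Matrix (Fin d) (Fin d) ℝ) (x : E d) : qf M (-x) = qf M x := by
  simp [qf, map_neg, inner_neg_left, inner_neg_right]

lemma toEuclideanLin_comp (M N : Matrix (Fin d) (Fin d) ℝ) (x : E d) :
    Matrix.toEuclideanLin M (Matrix.toEuclideanLin N x) = Matrix.toEuclideanLin (M * N) x := by
  simp [Matrix.toEuclideanLin_apply, Matrix.mulVec_mulVec]

lemma toEuclideanLin_one (x : E d) :
    Matrix.toEuclideanLin (1 : Matrix (Fin d) (Fin d) ℝ) x = x := by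
  simp [Matrix.toEuclideanLin_apply]

lemma qf_one (x : E d) : qf (1 : Matrix (Fin d) (Fin d) ℝ) x = ‖x‖ ^ 2 := by
  rw [qf, toEuclideanLin_one, real_inner_self_eq_norm_sq]

lemma sub_smul_one_posSemidef {H : Matrix (Fin d) (Fin d) ℝ} (hH : H.IsHermitian)
    {c : ℝ} (h : ∀ i, c ≤ hH.eigenvalues i) : (H - c • 1).PosSemidef := by
  have hU : (hH.eigenvectorUnitary : Matrix (Fin d) (Fin d) ℝ) *
      star (hH.eigenvectorUnitary : Matrix (Fin d) (Fin d) ℝ) = 1 :=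
    Matrix.mem_unitaryGroup_iff.mp hH.eigenvectorUnitary.2
  have key : H - c • 1 = (hH.eigenvectorUnitary : Matrix (Fin d) (Fin d) ℝ) *
      Matrix.diagonal (fun i => hH.eigenvalues i - c) *
      ((hH.eigenvectorUnitary : Matrix (Fin d) (Fin d) ℝ))ᴴ := by
    conv_lhs => rw [hH.spectral_theorem]
    rw [Unitary.conjStarAlgAut_apply]
    rw [← Matrix.star_eq_conjTranspose]
    have h1 : (c : ℝ) • (1 : Matrix (Fin d) (Fin d) ℝ) =
        (hH.eigenvectorUnitary : Matrix (Fin d) (Fin d) ℝ) * (c • 1) *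
        star (hH.eigenvectorUnitary : Matrix (Fin d) (Fin d) ℝ) := by
      rw [Matrix.mul_smul, Matrix.smul_mul, mul_one, hU]
    rw [h1, ← Matrix.sub_mul, ← Matrix.mul_sub]
    congr 1
    congr 1
    rw [Matrix.smul_one_eq_diagonal, ← Matrix.diagonal_sub]
    rfl
  rw [key]
  exact (Matrix.posSemidef_diagonal_iff.mpr
    (fun i => by simpa using h i)).mul_mul_conjTranspose_same _

lemma smul_one_sub_posSemidef {H : Matrix (Fin d) (Fin d) ℝ} (hH : H.IsHermitian)
    {c : ℝ} (h : ∀ i, hH.eigenvalues i ≤ c) : (c • 1 - H).PosSemidef := by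
  have hU : (hH.eigenvectorUnitary : Matrix (Fin d) (Fin d) ℝ) *
      star (hH.eigenvectorUnitary : Matrix (Fin d) (Fin d) ℝ) = 1 :=
    Matrix.mem_unitaryGroup_iff.mp hH.eigenvectorUnitary.2
  have key : c • 1 - H = (hH.eigenvectorUnitary : Matrix (Fin d) (Fin d) ℝ) *
      Matrix.diagonal (fun i => c - hH.eigenvalues i) *
      ((hH.eigenvectorUnitary : Matrix (Fin d) (Fin d) ℝ))ᴴ := by
    conv_lhs => rw [hH.spectral_theorem]
    rw [Unitary.conjStarAlgAut_apply]
    rw [← Matrix.star_eq_conjTranspose]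
    have h1 : (c : ℝ) • (1 : Matrix (Fin d) (Fin d) ℝ) =
        (hH.eigenvectorUnitary : Matrix (Fin d) (Fin d) ℝ) * (c • 1) *
        star (hH.eigenvectorUnitary : Matrix (Fin d) (Fin d) ℝ) := by
      rw [Matrix.mul_smul, Matrix.smul_mul, mul_one, hU]
    rw [h1, ← Matrix.sub_mul, ← Matrix.mul_sub]
    congr 1
    congr 1
    rw [Matrix.smul_one_eq_diagonal, ← Matrix.diagonal_sub]
    rfl
  rw [key]
  exact (Matrix.posSemidef_diagonal_iff.mpr
    (fun i => by simpa using h i)).mul_mul_conjTranspose_same _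

/-- AM-GM style bound for PSD bilinear forms. -/
lemma bf_le {P : Matrix (Fin d) (Fin d) ℝ} (hP : P.PosSemidef) (x y : E d) (s : ℝ)
    (hs : 0 ≤ s) : 2 * s * bf P x y ≤ s ^ 2 * qf P x + qf P y := by
  have h := qf_nonneg hP (s • x - y)
  rw [qf_sub hP.1, qf_smul, bf_smul_left] at h
  linarith

/-- Strong convexity consequence: a minimizer of `½‖z-a‖²_A + r z` satisfies the
strengthened inequality with quadratic margin. -/
lemma prox_strong {A : Matrix (Fin d) (Fin d) ℝ} (hA : A.PosSemidef)
    (a : E d) (r : E d → ℝ) (hr : ConvexOn ℝ Set.univ r)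
    (xb : E d) (hxb : ∀ z, qf A (xb - a) / 2 + r xb ≤ qf A (z - a) / 2 + r z)
    (z : E d) :
    qf A (xb - a) / 2 + r xb + qf A (z - xb) / 2 ≤ qf A (z - a) / 2 + r z := by
  set Q := qf A (z - xb) with hQdef
  have hQ0 : 0 ≤ Q := qf_nonneg hA _
  set c := (qf A (z - a) / 2 + r z) - (qf A (xb - a) / 2 + r xb) with hcdef
  have hc0 : 0 ≤ c := by have := hxb z; rw [hcdef]; linarith
  by_contra hcon
  push_neg at hcon
  have hcQ : c < Q / 2 := by rw [hcdef]; linarith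
  clear_value Q c
  have hQpos : 0 < Q := by linarith
  set l : ℝ := (1 - 2 * c / Q) / 2 with hldef
  have hl0 : 0 < l := by
    have h7 : 2 * c / Q < 1 := by rw [div_lt_one hQpos]; linarith
    rw [hldef]; linarith
  have hl1 : l < 1 := by
    have h8 : 0 ≤ 2 * c / Q := by positivity
    rw [hldef]; linarith
  have hlQ : l * Q = (Q - 2 * c) / 2 := by
    rw [hldef]
    field_simp
  set m : E d := xb + l • (z - xb) with hmdef
  have hm2 : m = (1 - l) • xb + l • z := by
    simp only [hmdef]; module
  -- convexity of r
  have hrm : r m ≤ (1 - l) * r xb + l * r z := by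
    rw [hm2]
    exact hr.2 (Set.mem_univ xb) (Set.mem_univ z) (by linarith) (by linarith) (by ring)
  -- quadratic expansion
  have hma : m - a = (xb - a) + l • (z - xb) := by simp only [hmdef]; module
  have hq1 : qf A (m - a) =
      qf A (xb - a) + 2 * (l * bf A (xb - a) (z - xb)) + l ^ 2 * Q := by
    rw [hma, qf_add hA.1, bf_smul_right, qf_smul, ← hQdef]
  have hza : z - a = (xb - a) + (z - xb) := by module
  have hq2 : qf A (z - a) = qf A (xb - a) + 2 * bf A (xb - a) (z - xb) + Q := by
    rw [hza, qf_add hA.1, ← hQdef]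
  set B := bf A (xb - a) (z - xb) with hBdef
  have hmin := hxb m
  -- from hmin: l * (r xb - r z) ≤ l * B + l^2 * Q / 2
  have step1 : l * (r xb - r z) ≤ l * B + l ^ 2 * Q / 2 := by
    have : qf A (xb - a) / 2 + r xb ≤
        (qf A (xb - a) + 2 * (l * B) + l ^ 2 * Q) / 2 + ((1 - l) * r xb + l * r z) := by
      calc qf A (xb - a) / 2 + r xb ≤ qf A (m - a) / 2 + r m := hmin
        _ ≤ _ := by rw [hq1]; linarith
    linarith
  have step2 : r xb - r z ≤ B + l * Q / 2 :=
    le_of_mul_le_mul_left (by nlinarith [step1]) hl0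
  -- c = B + Q/2 + r z - r xb
  have hc2 : c = B + Q / 2 + (r z - r xb) := by
    simp only [hcdef, hBdef]; rw [hq2]; ring
  -- contradiction
  have : Q / 2 ≤ c := by
    have h5 : B + Q / 2 + (r z - r xb) ≥ Q / 2 - l * Q / 2 := by linarith
    have h6 : c ≥ Q / 2 - (Q - 2 * c) / 4 := by
      rw [hc2]
      have : l * Q / 2 = (Q - 2 * c) / 4 := by rw [hlQ]; ring
      linarith
    linarith
  linarith

lemma step_contraction {H A : Matrix (Fin d) (Fin d) ℝ} (hH : H.PosSemidef)
    {ε : ℝ} (hε0 : 0 < ε) (hε1 : ε < 1)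
    (h1 : (A - (1 - ε) • H).PosSemidef) (h2 : ((1 + ε) • H - A).PosSemidef)
    (Δ v : E d) (hkey : qf A Δ ≤ bf (A - H) Δ v) :
    Real.sqrt (qf H Δ) ≤ ε / (1 - ε) * Real.sqrt (qf H v) := by
  have h1ε : 0 < 1 - ε := by linarith
  have hqΔ0 : 0 ≤ qf H Δ := qf_nonneg hH Δ
  have hqv0 : 0 ≤ qf H v := qf_nonneg hH v
  have hlow : (1 - ε) * qf H Δ ≤ qf A Δ := by
    have h := qf_nonneg h1 Δ
    rw [qf_matrix_sub, qf_matrix_smul] at h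
    linarith
  have hkey' : qf A Δ ≤ bf A Δ v - bf H Δ v := by rw [← bf_matrix_sub]; exact hkey
  have main : ∀ s : ℝ, 0 ≤ s →
      4 * (s * ((1 - ε) * qf H Δ)) ≤ 2 * ε * (s ^ 2 * qf H Δ + qf H v) := by
    intro s hs
    have e2 := bf_le h1 Δ v s hs
    rw [qf_matrix_sub, qf_matrix_smul, qf_matrix_sub, qf_matrix_smul,
      bf_matrix_sub, bf_matrix_smul] at e2
    have e1 := bf_le h2 Δ (-v) s hs
    rw [qf_neg, bf_neg_right, qf_matrix_sub, qf_matrix_smul, qf_matrix_sub, qf_matrix_smul,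
      bf_matrix_sub, bf_matrix_smul] at e1
    have h4 : s * ((1 - ε) * qf H Δ) ≤ s * (bf A Δ v - bf H Δ v) :=
      mul_le_mul_of_nonneg_left (le_trans hlow hkey') hs
    nlinarith [e1, e2, h4]
  rcases eq_or_lt_of_le hqΔ0 with h0 | hΔpos
  · rw [← h0, Real.sqrt_zero]
    positivity
  rcases eq_or_lt_of_le hqv0 with h0v | hvpos
  · exfalso
    have hspos : (0:ℝ) < (1 - ε) / ε := by positivity
    have t := main ((1 - ε) / ε) hspos.le
    rw [← h0v] at t
    have hX : 0 < (1 - ε) / ε * qf H Δ := mul_pos hspos hΔpos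
    have hc : 2 * ε * (((1 - ε) / ε) ^ 2 * qf H Δ) =
        2 * (1 - ε) * ((1 - ε) / ε * qf H Δ) := by
      field_simp
    nlinarith [t, hc, mul_pos h1ε hX]
  · have ha : 0 < Real.sqrt (qf H Δ) := Real.sqrt_pos.mpr hΔpos
    have hb : 0 < Real.sqrt (qf H v) := Real.sqrt_pos.mpr hvpos
    set a := Real.sqrt (qf H Δ) with hadef
    set bb := Real.sqrt (qf H v) with hbdef
    have ha2 : a ^ 2 = qf H Δ := Real.sq_sqrt hqΔ0
    have hb2 : bb ^ 2 = qf H v := Real.sq_sqrt hqv0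
    have t := main (bb / a) (by positivity)
    rw [← ha2, ← hb2] at t
    have ha' : a ≠ 0 := ne_of_gt ha
    have q1 : bb / a * a ^ 2 = bb * a := by field_simp
    have q2 : (bb / a) ^ 2 * a ^ 2 = bb ^ 2 := by field_simp
    rw [div_mul_eq_mul_div, le_div_iff₀ h1ε]
    nlinarith [t, q1, q2, hb, ha]

lemma bf_sub_left (M : Matrix (Fin d) (Fin d) ℝ) (x y z : E d) :
    bf M (x - y) z = bf M x z - bf M y z := by
  simp [bf, inner_sub_left]

lemma four_point {M : Matrix (Fin d) (Fin d) ℝ} (hM : M.IsHermitian) (x y p q : E d) :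
    qf M (y - p) - qf M (x - p) + qf M (x - q) - qf M (y - q) =
      2 * bf M (x - y) (p - q) := by
  rw [qf_sub hM, qf_sub hM, qf_sub hM, qf_sub hM, bf_sub_left, bf_sub_right, bf_sub_right]
  ring

/-- `wstar` minimizes its own proximal objective. -/
lemma wstar_prox_min {A : Matrix (Fin d) (Fin d) ℝ} (hA : A.PosDef)
    (r : E d → ℝ) (g wstar : E d)
    (hsub : ∀ z, r wstar ≤ r z + ⟪g, z - wstar⟫) (z : E d) :
    qf A (wstar - (wstar - Matrix.toEuclideanLin A⁻¹ g)) / 2 + r wstar ≤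
      qf A (z - (wstar - Matrix.toEuclideanLin A⁻¹ g)) / 2 + r z := by
  have hdet : IsUnit A.det := isUnit_iff_ne_zero.mpr (ne_of_gt hA.det_pos)
  have h1 : wstar - (wstar - Matrix.toEuclideanLin A⁻¹ g) = Matrix.toEuclideanLin A⁻¹ g := by
    module
  have h2 : z - (wstar - Matrix.toEuclideanLin A⁻¹ g) =
      (z - wstar) + Matrix.toEuclideanLin A⁻¹ g := by module
  rw [h1, h2, qf_add hA.1]
  have h3 : bf A (z - wstar) (Matrix.toEuclideanLin A⁻¹ g) = ⟪g, z - wstar⟫ := by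
    unfold bf
    rw [toEuclideanLin_comp, Matrix.mul_nonsing_inv _ hdet, toEuclideanLin_one,
      real_inner_comm]
  rw [h3]
  have h4 := hsub z
  have h5 : 0 ≤ qf A (z - wstar) := qf_nonneg hA.posSemidef _
  linarith

/-- One step of the SSPN iteration contracts the `H`-weighted distance to `wstar`. -/
lemma one_step {H A : Matrix (Fin d) (Fin d) ℝ} (hH : H.PosDef) (hA : A.PosDef)
    {ε : ℝ} (hε0 : 0 < ε) (hε1 : ε < 1)
    (h1 : (A - (1 - ε) • H).PosSemidef) (h2 : ((1 + ε) • H - A).PosSemidef)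
    (r : E d → ℝ) (hr : ConvexOn ℝ Set.univ r)
    (g : E d → E d)
    (hg : ∀ x y : E d, g x - g y = Matrix.toEuclideanLin H (x - y))
    (wstar wt wt1 : E d)
    (hsub : ∀ z, r wstar ≤ r z + ⟪g wstar, z - wstar⟫)
    (hup : ∀ z, qf A (wt1 - (wt - Matrix.toEuclideanLin A⁻¹ (g wt))) / 2 + r wt1 ≤
        qf A (z - (wt - Matrix.toEuclideanLin A⁻¹ (g wt))) / 2 + r z) :
    Real.sqrt (qf H (wt1 - wstar)) ≤ ε / (1 - ε) * Real.sqrt (qf H (wt - wstar)) := by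
  have hminstar := wstar_prox_min hA r (g wstar) wstar hsub
  set at_ := wt - Matrix.toEuclideanLin A⁻¹ (g wt) with hat
  set astar := wstar - Matrix.toEuclideanLin A⁻¹ (g wstar) with hastar
  have S1 := prox_strong hA.posSemidef at_ r hr wt1 hup wstar
  have S2 := prox_strong hA.posSemidef astar r hr wstar hminstar wt1
  have hfour : qf A (wstar - at_) - qf A (wt1 - at_) + qf A (wt1 - astar) -
      qf A (wstar - astar) = 2 * bf A (wt1 - wstar) (at_ - astar) :=
    four_point hA.1 wt1 wstar at_ astar
  have hneg : qf A (wstar - wt1) = qf A (wt1 - wstar) := by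
    rw [← neg_sub wt1 wstar, qf_neg]
  have hkey : qf A (wt1 - wstar) ≤ bf A (wt1 - wstar) (at_ - astar) := by
    linarith [S1, S2, hfour, hneg]
  have hadiff : at_ - astar =
      (wt - wstar) - Matrix.toEuclideanLin A⁻¹ (Matrix.toEuclideanLin H (wt - wstar)) := by
    rw [hat, hastar, ← hg wt wstar, map_sub]
    module
  have hdet : IsUnit A.det := isUnit_iff_ne_zero.mpr (ne_of_gt hA.det_pos)
  have hbf : bf A (wt1 - wstar) (at_ - astar) =
      bf (A - H) (wt1 - wstar) (wt - wstar) := by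
    rw [hadiff, bf_sub_right, bf_matrix_sub]
    congr 1
    unfold bf
    rw [toEuclideanLin_comp, Matrix.mul_nonsing_inv _ hdet, toEuclideanLin_one]
  rw [hbf] at hkey
  exact step_contraction hH.posSemidef hε0 hε1 h1 h2 _ _ hkey

/-- At a global minimizer of `F + r`, `-∇F(w*)` is a subgradient of `r`. -/
lemma subgrad {F : E d → ℝ} (hF : ContDiff ℝ 2 F) (r : E d → ℝ)
    (hr : ConvexOn ℝ Set.univ r)
    (wstar : E d) (hmin : ∀ u, F wstar + r wstar ≤ F u + r u) (z : E d) :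
    r wstar ≤ r z + ⟪gradient F wstar, z - wstar⟫ := by
  set g := gradient F wstar with hgdef
  set u := z - wstar with hu
  have hdF : HasGradientAt F g wstar :=
    ((hF.differentiable (by norm_num)).differentiableAt).hasGradientAt
  have hline : HasDerivAt (fun t : ℝ => wstar + t • u) u 0 := by
    have h1 : HasDerivAt (fun t : ℝ => t • u) ((1 : ℝ) • u) 0 :=
      (hasDerivAt_id (0 : ℝ)).smul_const u
    simpa using h1.const_add wstar
  have hφ : HasDerivAt (fun t : ℝ => F (wstar + t • u)) ⟪g, u⟫ 0 := by
    have hF' : HasFDerivAt F (InnerProductSpace.toDual ℝ _ g) wstar := hdF.hasFDerivAt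
    have hl : HasFDerivAt F (InnerProductSpace.toDual ℝ _ g)
        ((fun t : ℝ => wstar + t • u) 0) := by simpa using hF'
    have hc := hl.comp_hasDerivAt (0 : ℝ) hline
    exact hc
  have hslope := hasDerivAt_iff_tendsto_slope.mp hφ
  have hmono : Filter.Tendsto (slope (fun t : ℝ => F (wstar + t • u)) 0)
      (nhdsWithin 0 (Set.Ioi 0)) (nhds ⟪g, u⟫) :=
    hslope.mono_left (nhdsWithin_mono 0
      (fun x (hx : x ∈ Set.Ioi (0:ℝ)) => Set.mem_compl_singleton_iff.mpr (ne_of_gt hx)))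
  have hev : ∀ᶠ l in nhdsWithin (0 : ℝ) (Set.Ioi 0),
      r wstar - r z ≤ slope (fun t : ℝ => F (wstar + t • u)) 0 l := by
    filter_upwards [Ioc_mem_nhdsGT (zero_lt_one)] with l hl
    obtain ⟨hl0, hl1⟩ := hl
    have hcomb : wstar + l • u = (1 - l) • wstar + l • z := by rw [hu]; module
    have hrc : r (wstar + l • u) ≤ (1 - l) * r wstar + l * r z := by
      rw [hcomb]
      exact hr.2 (Set.mem_univ _) (Set.mem_univ _) (by linarith) (le_of_lt hl0) (by ring)
    have hm := hmin (wstar + l • u)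
    have key : l * (r wstar - r z) ≤ F (wstar + l • u) - F wstar := by linarith
    rw [slope_def_field]
    simp only [sub_zero, zero_smul, add_zero]
    rw [le_div_iff₀ hl0]
    nlinarith [key]
  have hfin : r wstar - r z ≤ ⟪g, u⟫ := ge_of_tendsto hmono hev
  linarith

end SSPNAux


open SSPNAux in
/-- global convergence of sub-sampled proximal Newton when the smooth part
`F` is quadratic with constant Hessian `H` (i.e. `∇F(w) = Hw + b`), and each iterate is
`w_{t+1} = prox_r^{H̃_t}(w_t − H̃_t⁻¹∇F(w_t))`. -/
theorem sspn_global_convergence_quadratic {d : ℕ}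
    (H : Matrix (Fin d) (Fin d) ℝ) (hH : H.PosDef)
    (r : EuclideanSpace ℝ (Fin d) → ℝ) (hr : ConvexOn ℝ Set.univ r)
    (F : EuclideanSpace ℝ (Fin d) → ℝ) (hF : ContDiff ℝ 2 F)
    (b : EuclideanSpace ℝ (Fin d))
    (hquad : ∀ w, gradient F w = Matrix.toEuclideanLin H w + b)
    (wstar : EuclideanSpace ℝ (Fin d)) (hmin : ∀ w, F wstar + r wstar ≤ F w + r w)
    (ε : ℝ) (hε : 0 < ε ∧ ε < 1)
    (Htil : ℕ → Matrix (Fin d) (Fin d) ℝ)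
    (hHtilPD : ∀ t, (Htil t).PosDef)
    (happrox : ∀ t, (Htil t - (1 - ε) • H).PosSemidef ∧ ((1 + ε) • H - Htil t).PosSemidef)
    (w : ℕ → EuclideanSpace ℝ (Fin d))
    (hupdate : ∀ t, ∀ z,
      (1 / 2) * normHE (Htil t) (w (t + 1) -
          (w t - Matrix.toEuclideanLin (Htil t)⁻¹ (gradient F (w t)))) ^ 2 + r (w (t + 1)) ≤
        (1 / 2) * normHE (Htil t) (z -
          (w t - Matrix.toEuclideanLin (Htil t)⁻¹ (gradient F (w t)))) ^ 2 + r z) :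
    ∀ t, ‖w t - wstar‖ ≤
      (ε / (1 - ε)) ^ t * Real.sqrt (sMax hH.1 / sMin hH.1) * ‖w 0 - wstar‖ := by
  obtain ⟨hε0, hε1⟩ := hε
  have h1ε : 0 < 1 - ε := by linarith
  have hρ0 : 0 ≤ ε / (1 - ε) := div_nonneg hε0.le h1ε.le
  have hg : ∀ x y : E d, gradient F x - gradient F y = Matrix.toEuclideanLin H (x - y) := by
    intro x y
    rw [hquad, hquad, map_sub]
    abel
  have hsub : ∀ z, r wstar ≤ r z + ⟪gradient F wstar, z - wstar⟫ :=
    subgrad hF r hr wstar hmin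
  have contract : ∀ n, Real.sqrt (qf H (w (n + 1) - wstar)) ≤
      ε / (1 - ε) * Real.sqrt (qf H (w n - wstar)) := by
    intro n
    refine one_step hH (hHtilPD n) hε0 hε1 (happrox n).1 (happrox n).2 r hr
      (gradient F) hg wstar (w n) (w (n + 1)) hsub ?_
    intro z
    have h := hupdate n z
    have hsq : ∀ y : E d, (1 / 2) * normHE (Htil n) y ^ 2 = qf (Htil n) y / 2 := by
      intro y
      have hy : normHE (Htil n) y = Real.sqrt (qf (Htil n) y) := rfl
      rw [hy, Real.sq_sqrt (qf_nonneg (hHtilPD n).posSemidef y)]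
      ring
    rw [hsq, hsq] at h
    exact h
  have key : ∀ t, Real.sqrt (qf H (w t - wstar)) ≤
      (ε / (1 - ε)) ^ t * Real.sqrt (qf H (w 0 - wstar)) := by
    intro t
    induction t with
    | zero => simp
    | succ n ih =>
      calc Real.sqrt (qf H (w (n + 1) - wstar))
          ≤ ε / (1 - ε) * Real.sqrt (qf H (w n - wstar)) := contract n
        _ ≤ ε / (1 - ε) * ((ε / (1 - ε)) ^ n * Real.sqrt (qf H (w 0 - wstar))) :=
            mul_le_mul_of_nonneg_left ih hρ0
        _ = (ε / (1 - ε)) ^ (n + 1) * Real.sqrt (qf H (w 0 - wstar)) := by ring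
  intro t
  rcases Nat.eq_zero_or_pos d with hd | hd
  · subst hd
    have hz : ∀ x : EuclideanSpace ℝ (Fin 0), ‖x‖ = 0 := by
      intro x
      simp [EuclideanSpace.norm_eq]
    rw [hz, hz]
    simp
  · haveI : Nonempty (Fin d) := ⟨⟨0, hd⟩⟩
    have hmin_le : ∀ i, sMin hH.1 ≤ hH.1.eigenvalues i := fun i =>
      ciInf_le (Set.Finite.bddBelow (Set.finite_range _)) i
    have hle_max : ∀ i, hH.1.eigenvalues i ≤ sMax hH.1 := fun i =>
      le_ciSup (Set.Finite.bddAbove (Set.finite_range _)) i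
    have hminpos : 0 < sMin hH.1 := by
      obtain ⟨j, hj⟩ := Finite.exists_min hH.1.eigenvalues
      exact lt_of_lt_of_le (hH.eigenvalues_pos j) (le_ciInf hj)
    have hmaxpos : 0 < sMax hH.1 :=
      lt_of_lt_of_le hminpos (le_trans (hmin_le ⟨0, hd⟩) (hle_max ⟨0, hd⟩))
    have psd1 := sub_smul_one_posSemidef hH.1 hmin_le
    have psd2 := smul_one_sub_posSemidef hH.1 hle_max
    have ray_low : ∀ x : E d, sMin hH.1 * ‖x‖ ^ 2 ≤ qf H x := by
      intro x
      have h := qf_nonneg psd1 x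
      rw [qf_matrix_sub, qf_matrix_smul, qf_one] at h
      linarith
    have ray_high : ∀ x : E d, qf H x ≤ sMax hH.1 * ‖x‖ ^ 2 := by
      intro x
      have h := qf_nonneg psd2 x
      rw [qf_matrix_sub, qf_matrix_smul, qf_one] at h
      linarith
    have hsqrtmin : (0 : ℝ) < Real.sqrt (sMin hH.1) := Real.sqrt_pos.mpr hminpos
    have h3 : ‖w t - wstar‖ ≤ Real.sqrt (qf H (w t - wstar)) / Real.sqrt (sMin hH.1) := by
      have h2 : ‖w t - wstar‖ ^ 2 ≤ qf H (w t - wstar) / sMin hH.1 :=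
        (le_div_iff₀ hminpos).mpr (by linarith [ray_low (w t - wstar)])
      have h3' : ‖w t - wstar‖ ≤ Real.sqrt (qf H (w t - wstar) / sMin hH.1) := by
        rw [← Real.sqrt_sq (norm_nonneg (w t - wstar))]
        exact Real.sqrt_le_sqrt h2
      rwa [Real.sqrt_div (qf_nonneg hH.posSemidef _)] at h3'
    have h4 : Real.sqrt (qf H (w 0 - wstar)) ≤ Real.sqrt (sMax hH.1) * ‖w 0 - wstar‖ := by
      calc Real.sqrt (qf H (w 0 - wstar))
          ≤ Real.sqrt (sMax hH.1 * ‖w 0 - wstar‖ ^ 2) :=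
            Real.sqrt_le_sqrt (ray_high (w 0 - wstar))
        _ = Real.sqrt (sMax hH.1) * ‖w 0 - wstar‖ := by
            rw [Real.sqrt_mul hmaxpos.le, Real.sqrt_sq (norm_nonneg _)]
    calc ‖w t - wstar‖ ≤ Real.sqrt (qf H (w t - wstar)) / Real.sqrt (sMin hH.1) := h3
      _ ≤ ((ε / (1 - ε)) ^ t * Real.sqrt (qf H (w 0 - wstar))) / Real.sqrt (sMin hH.1) :=
          div_le_div_of_nonneg_right (key t) hsqrtmin.le
      _ ≤ ((ε / (1 - ε)) ^ t * (Real.sqrt (sMax hH.1) * ‖w 0 - wstar‖)) /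
            Real.sqrt (sMin hH.1) :=
          div_le_div_of_nonneg_right
            (mul_le_mul_of_nonneg_left h4 (pow_nonneg hρ0 t)) hsqrtmin.le
      _ = (ε / (1 - ε)) ^ t * Real.sqrt (sMax hH.1 / sMin hH.1) * ‖w 0 - wstar‖ := by
          rw [Real.sqrt_div hmaxpos.le]
          ring
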